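/- arXiv:1202.6303 — 2 statements merged into one kernel-verified Lean document; each statement's English description precedes it below -/
import Mathlib

section
/- Let L be a positive integer and a₁, a₂ ∈ SL(2,ℤ) with a₁ ≡ a₂ (mod L) entrywise. For a ∈ SL(2,ℤ) let σ_a : T(L) → T(L) be the permutation defined by SL(2,ℤ)·A(L,m,k)·a = SL(2,ℤ)·A(L, σ_a(m,k)). Then σ_{a₁} = σ_{a₂}; i.e., for every (m,k) ∈ T(L), σ_{a₁}(m,k) = σ_{a₂}(m,k). -/
open Matrix

/-- The index set `T(L) = {(m,k) : m ∣ L, m > 0, 0 ≤ k < L/m}`. -/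
def heckeIndex (L : ℕ) : Set (ℕ × ℕ) :=
  {p | p.1 ∣ L ∧ 0 < p.1 ∧ p.2 < L / p.1}

/-- The Hecke matrix `A(L,m,k) = L^{-1/2} · [[m, k], [0, L/m]]` as a real matrix. -/
noncomputable def heckeMat (L m k : ℕ) : Matrix (Fin 2) (Fin 2) ℝ :=
  (Real.sqrt (L : ℝ))⁻¹ • !![(m : ℝ), (k : ℝ); 0, (L : ℝ) / (m : ℝ)]

/-- The left coset `SL(2,ℤ)·x` of a real matrix `x`. -/
def slCoset (x : Matrix (Fin 2) (Fin 2) ℝ) : Set (Matrix (Fin 2) (Fin 2) ℝ) :=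
  {y | ∃ γ : Matrix.SpecialLinearGroup (Fin 2) ℤ,
    y = (γ : Matrix (Fin 2) (Fin 2) ℤ).map (Int.cast : ℤ → ℝ) * x}

private lemma mapR_mul (A B : Matrix (Fin 2) (Fin 2) ℤ) :
    (A * B).map (Int.cast : ℤ → ℝ) = A.map Int.cast * B.map Int.cast :=
  Matrix.map_mul (f := Int.castRingHom ℝ)

private lemma mapR_one :
    ((1 : Matrix (Fin 2) (Fin 2) ℤ)).map (Int.cast : ℤ → ℝ) = 1 :=
  Matrix.map_one _ Int.cast_zero Int.cast_one

private lemma slCoset_eq_of_rel (x y : Matrix (Fin 2) (Fin 2) ℝ)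
    (γ : Matrix.SpecialLinearGroup (Fin 2) ℤ)
    (h : x = (γ : Matrix (Fin 2) (Fin 2) ℤ).map (Int.cast : ℤ → ℝ) * y) :
    slCoset x = slCoset y := by
  ext z
  constructor
  · rintro ⟨δ, rfl⟩
    exact ⟨δ * γ, by rw [h, Matrix.SpecialLinearGroup.coe_mul, mapR_mul, mul_assoc]⟩
  · rintro ⟨δ, rfl⟩
    refine ⟨δ * γ⁻¹, ?_⟩
    have h1 : ((γ⁻¹ : Matrix.SpecialLinearGroup (Fin 2) ℤ) : Matrix (Fin 2) (Fin 2) ℤ).map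
        (Int.cast : ℤ → ℝ) * ((γ : Matrix (Fin 2) (Fin 2) ℤ)).map (Int.cast : ℤ → ℝ) = 1 := by
      rw [← mapR_mul, ← Matrix.SpecialLinearGroup.coe_mul, inv_mul_cancel,
        Matrix.SpecialLinearGroup.coe_one, mapR_one]
    rw [Matrix.SpecialLinearGroup.coe_mul, mapR_mul, h, mul_assoc,
      ← mul_assoc (((γ⁻¹ : Matrix.SpecialLinearGroup (Fin 2) ℤ) : Matrix (Fin 2) (Fin 2) ℤ).map _), h1, one_mul]

private lemma exists_of_slCoset_eq (x y : Matrix (Fin 2) (Fin 2) ℝ)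
    (h : slCoset x = slCoset y) :
    ∃ γ : Matrix.SpecialLinearGroup (Fin 2) ℤ,
      x = (γ : Matrix (Fin 2) (Fin 2) ℤ).map (Int.cast : ℤ → ℝ) * y := by
  have hx : x ∈ slCoset x := ⟨1, by simp [mapR_one]⟩
  rw [h] at hx
  exact hx

/-- Injectivity of `(m,k) ↦ slCoset (heckeMat L m k)` on `heckeIndex L`. -/
private lemma hecke_inj (L : ℕ) (hL : 0 < L) (p q : ℕ × ℕ)
    (hp : p ∈ heckeIndex L) (hq : q ∈ heckeIndex L)
    (h : slCoset (heckeMat L p.1 p.2) = slCoset (heckeMat L q.1 q.2)) : p = q := by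
  obtain ⟨m₁, k₁⟩ := p
  obtain ⟨m₂, k₂⟩ := q
  obtain ⟨hm₁L, hm₁, hk₁⟩ := hp
  obtain ⟨hm₂L, hm₂, hk₂⟩ := hq
  set n₁ := L / m₁ with hn₁def
  set n₂ := L / m₂ with hn₂def
  have hn₁ : m₁ * n₁ = L := Nat.mul_div_cancel' hm₁L
  have hn₂ : m₂ * n₂ = L := Nat.mul_div_cancel' hm₂L
  obtain ⟨γ, hγ⟩ := exists_of_slCoset_eq _ _ h
  -- real matrices without the scalar
  have hcast₁ : ((L : ℝ) / (m₁ : ℝ)) = (n₁ : ℝ) := by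
    field_simp [← hn₁]
    exact_mod_cast hn₁.symm
  have hcast₂ : ((L : ℝ) / (m₂ : ℝ)) = (n₂ : ℝ) := by
    field_simp [← hn₂]
    exact_mod_cast hn₂.symm
  have hs : (Real.sqrt (L : ℝ))⁻¹ ≠ 0 := by
    have : (0:ℝ) < Real.sqrt L := Real.sqrt_pos.mpr (by exact_mod_cast hL)
    positivity
  have hMz : (!![(m₁:ℤ), (k₁:ℤ); 0, (n₁:ℤ)]).map (Int.cast : ℤ → ℝ) =
      !![(m₁ : ℝ), (k₁ : ℝ); 0, (L : ℝ) / (m₁ : ℝ)] := by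
    rw [hcast₁]
    ext i j; fin_cases i <;> fin_cases j <;> simp
  have hMz₂ : (!![(m₂:ℤ), (k₂:ℤ); 0, (n₂:ℤ)]).map (Int.cast : ℤ → ℝ) =
      !![(m₂ : ℝ), (k₂ : ℝ); 0, (L : ℝ) / (m₂ : ℝ)] := by
    rw [hcast₂]
    ext i j; fin_cases i <;> fin_cases j <;> simp
  have hM : !![(m₁:ℤ), (k₁:ℤ); 0, (n₁:ℤ)] =
      (γ : Matrix (Fin 2) (Fin 2) ℤ) * !![(m₂:ℤ), (k₂:ℤ); 0, (n₂:ℤ)] := by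
    apply Matrix.map_injective (Int.cast_injective : Function.Injective (Int.cast : ℤ → ℝ))
    show Matrix.map _ _ = Matrix.map _ _
    rw [mapR_mul, hMz, hMz₂]
    have := hγ
    unfold heckeMat at this
    rw [Matrix.mul_smul] at this
    exact smul_right_injective _ hs this
  set g := (γ : Matrix (Fin 2) (Fin 2) ℤ) with hg
  have e00 : (m₁ : ℤ) = g 0 0 * m₂ + g 0 1 * 0 := by
    have := congrFun (congrFun hM 0) 0
    simpa [Matrix.mul_apply, Fin.sum_univ_two] using this
  have e01 : (k₁ : ℤ) = g 0 0 * k₂ + g 0 1 * n₂ := by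
    have := congrFun (congrFun hM 0) 1
    simpa [Matrix.mul_apply, Fin.sum_univ_two] using this
  have e10 : (0 : ℤ) = g 1 0 * m₂ + g 1 1 * 0 := by
    have := congrFun (congrFun hM 1) 0
    simpa [Matrix.mul_apply, Fin.sum_univ_two] using this
  have hg10 : g 1 0 = 0 := by
    have hm₂0 : (m₂ : ℤ) ≠ 0 := by exact_mod_cast hm₂.ne'
    have : g 1 0 * (m₂:ℤ) = 0 := by linarith [e10]
    rcases mul_eq_zero.mp this with h' | h'
    · exact h'
    · exact absurd h' hm₂0
  have hdet : g 0 0 * g 1 1 - g 0 1 * g 1 0 = 1 := by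
    have := γ.property
    rwa [Matrix.det_fin_two] at this
  have hunit : g 0 0 * g 1 1 = 1 := by rw [hg10] at hdet; linarith
  have hg00 : g 0 0 = 1 := by
    rcases Int.isUnit_iff.mp (IsUnit.of_mul_eq_one _ hunit) with h' | h'
    · exact h'
    · exfalso
      rw [h'] at e00
      have : (m₁ : ℤ) = -(m₂ : ℤ) := by linarith
      have h1 : (0:ℤ) < m₁ := by exact_mod_cast hm₁
      have h2 : (0:ℤ) < m₂ := by exact_mod_cast hm₂
      linarith
  have hm : m₁ = m₂ := by
    have : (m₁ : ℤ) = m₂ := by rw [hg00] at e00; linarith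
    exact_mod_cast this
  have hnn : n₁ = n₂ := by rw [hn₁def, hn₂def, hm]
  have hn₂pos : 0 < n₂ := lt_of_le_of_lt (Nat.zero_le _) hk₂
  have hk : k₁ = k₂ := by
    have hdvd : (n₂ : ℤ) ∣ ((k₁ : ℤ) - k₂) := ⟨g 0 1, by rw [hg00] at e01; linarith⟩
    have habs : |(k₁ : ℤ) - k₂| < n₂ := by
      rw [abs_lt]
      constructor
      · have : (k₂ : ℤ) < n₂ := by exact_mod_cast hk₂
        have : (0:ℤ) ≤ k₁ := Int.natCast_nonneg _
        omega
      · have h1 : (k₁ : ℤ) < n₁ := by exact_mod_cast hk₁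
        have : (0:ℤ) ≤ k₂ := Int.natCast_nonneg _
        rw [hnn] at h1
        omega
    have := Int.eq_zero_of_abs_lt_dvd hdvd habs
    omega
  simp [hm, hk]

theorem hecke_perm_mod_L (L : ℕ) (hL : 0 < L)
    (a₁ a₂ : Matrix.SpecialLinearGroup (Fin 2) ℤ)
    (hcong : ∀ i j, (L : ℤ) ∣ ((a₁ : Matrix (Fin 2) (Fin 2) ℤ) i j -
      (a₂ : Matrix (Fin 2) (Fin 2) ℤ) i j))
    (σ₁ σ₂ : ℕ × ℕ → ℕ × ℕ)
    (hσ₁ : ∀ p ∈ heckeIndex L, σ₁ p ∈ heckeIndex L ∧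
      slCoset (heckeMat L p.1 p.2 * (a₁ : Matrix (Fin 2) (Fin 2) ℤ).map (Int.cast : ℤ → ℝ)) =
        slCoset (heckeMat L (σ₁ p).1 (σ₁ p).2))
    (hσ₂ : ∀ p ∈ heckeIndex L, σ₂ p ∈ heckeIndex L ∧
      slCoset (heckeMat L p.1 p.2 * (a₂ : Matrix (Fin 2) (Fin 2) ℤ).map (Int.cast : ℤ → ℝ)) =
        slCoset (heckeMat L (σ₂ p).1 (σ₂ p).2)) :
    ∀ p ∈ heckeIndex L, σ₁ p = σ₂ p := by
  intro p hp
  obtain ⟨hσ₁p, hc₁⟩ := hσ₁ p hp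
  obtain ⟨hσ₂p, hc₂⟩ := hσ₂ p hp
  -- key: the two products lie in the same coset
  have key : slCoset (heckeMat L p.1 p.2 * (a₁ : Matrix (Fin 2) (Fin 2) ℤ).map (Int.cast : ℤ → ℝ)) =
      slCoset (heckeMat L p.1 p.2 * (a₂ : Matrix (Fin 2) (Fin 2) ℤ).map (Int.cast : ℤ → ℝ)) := by
    obtain ⟨m, k⟩ := p
    obtain ⟨hmL, hm, hk⟩ := hp
    set n := L / m with hndef
    have hn : m * n = L := Nat.mul_div_cancel' hmL
    -- b = a₁ * a₂⁻¹ ≡ 1 mod L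
    set b := a₁ * a₂⁻¹ with hbdef
    have hbval : (b : Matrix (Fin 2) (Fin 2) ℤ) * (a₂ : Matrix (Fin 2) (Fin 2) ℤ) =
        (a₁ : Matrix (Fin 2) (Fin 2) ℤ) := by
      have : (b * a₂ : Matrix.SpecialLinearGroup (Fin 2) ℤ) = a₁ := by
        rw [hbdef]; group
      calc (b : Matrix (Fin 2) (Fin 2) ℤ) * a₂
          = ((b * a₂ : Matrix.SpecialLinearGroup (Fin 2) ℤ) : Matrix (Fin 2) (Fin 2) ℤ) :=
            (Matrix.SpecialLinearGroup.coe_mul b a₂).symm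
        _ = _ := by rw [this]
    have hbdvd : ∀ i j, (L : ℤ) ∣ ((b : Matrix (Fin 2) (Fin 2) ℤ) i j -
        (1 : Matrix (Fin 2) (Fin 2) ℤ) i j) := by
      intro i j
      have h2 : ((a₂ : Matrix (Fin 2) (Fin 2) ℤ)) *
          ((a₂⁻¹ : Matrix.SpecialLinearGroup (Fin 2) ℤ) : Matrix (Fin 2) (Fin 2) ℤ) = 1 := by
        have h3 := Matrix.SpecialLinearGroup.coe_mul a₂ a₂⁻¹
        rw [mul_inv_cancel] at h3
        simpa using h3.symm
      have h1 : (b : Matrix (Fin 2) (Fin 2) ℤ) - 1 =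
          ((a₁ : Matrix (Fin 2) (Fin 2) ℤ) - a₂) * (a₂⁻¹ : Matrix.SpecialLinearGroup (Fin 2) ℤ) := by
        rw [sub_mul, hbdef, Matrix.SpecialLinearGroup.coe_mul, h2]
      have : (L : ℤ) ∣ (((a₁ : Matrix (Fin 2) (Fin 2) ℤ) - a₂) *
          (a₂⁻¹ : Matrix.SpecialLinearGroup (Fin 2) ℤ)) i j := by
        rw [Matrix.mul_apply]
        refine Finset.dvd_sum fun l _ => ?_
        exact Dvd.dvd.mul_right (by simpa using hcong i l) _
      rw [show (b : Matrix (Fin 2) (Fin 2) ℤ) i j - (1 : Matrix (Fin 2) (Fin 2) ℤ) i j =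
        ((b : Matrix (Fin 2) (Fin 2) ℤ) - 1) i j by simp, h1]
      exact this
    -- c with b = 1 + L • c
    set c : Matrix (Fin 2) (Fin 2) ℤ := Matrix.of fun i j =>
      ((b : Matrix (Fin 2) (Fin 2) ℤ) i j - (1 : Matrix (Fin 2) (Fin 2) ℤ) i j) / L with hcdef
    have hbc : (b : Matrix (Fin 2) (Fin 2) ℤ) = 1 + (L : ℤ) • c := by
      ext i j
      have := Int.mul_ediv_cancel' (hbdvd i j)
      simp only [Matrix.add_apply, Matrix.smul_apply, hcdef, Matrix.of_apply, smul_eq_mul]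
      omega
    set Mz : Matrix (Fin 2) (Fin 2) ℤ := !![(m:ℤ), (k:ℤ); 0, (n:ℤ)] with hMzdef
    set N : Matrix (Fin 2) (Fin 2) ℤ := !![(n:ℤ), -(k:ℤ); 0, (m:ℤ)] with hNdef
    have hmn : (m:ℤ) * n = L := by exact_mod_cast hn
    have hNM : N * Mz = (L : ℤ) • 1 := by
      rw [hNdef, hMzdef, Matrix.mul_fin_two]
      ext i j; fin_cases i <;> fin_cases j <;>
        simp [Matrix.one_fin_two] <;> linarith [hmn]
    set γz : Matrix (Fin 2) (Fin 2) ℤ := 1 + Mz * c * N with hγzdef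
    have hγM : γz * Mz = Mz * (b : Matrix (Fin 2) (Fin 2) ℤ) := by
      rw [hγzdef, hbc, add_mul, one_mul, mul_assoc, mul_assoc, hNM, mul_add, mul_one]
      congr 1
      simp only [Matrix.mul_smul, mul_assoc, smul_eq_mul]
      rw [mul_one]
    have hdetM : Mz.det = L := by
      rw [hMzdef, Matrix.det_fin_two_of]; linarith [hmn]
    have hdetγ : γz.det = 1 := by
      have h1 : γz.det * (L:ℤ) = 1 * (L:ℤ) := by
        have := congrArg Matrix.det hγM
        rw [Matrix.det_mul, Matrix.det_mul, hdetM, b.property] at this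
        linarith
      have hL0 : (L:ℤ) ≠ 0 := by exact_mod_cast hL.ne'
      exact mul_right_cancel₀ hL0 h1
    set γ : Matrix.SpecialLinearGroup (Fin 2) ℤ := ⟨γz, hdetγ⟩ with hγdef
    apply slCoset_eq_of_rel _ _ γ
    -- need: A * a₁ = γ * (A * a₂)
    have hcast : ((L : ℝ) / (m : ℝ)) = (n : ℝ) := by
      field_simp [← hn]
      exact_mod_cast hn.symm
    have hMmap : Mz.map (Int.cast : ℤ → ℝ) = !![(m : ℝ), (k : ℝ); 0, (L : ℝ) / (m : ℝ)] := by
      rw [hcast, hMzdef]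
      ext i j; fin_cases i <;> fin_cases j <;> simp
    have hint : γz * Mz * (a₂ : Matrix (Fin 2) (Fin 2) ℤ) = Mz * (a₁ : Matrix (Fin 2) (Fin 2) ℤ) := by
      rw [hγM, mul_assoc, hbval]
    have hreal := congrArg (fun X => X.map (Int.cast : ℤ → ℝ)) hint
    simp only [mapR_mul] at hreal
    show heckeMat L m k * _ = (γz).map (Int.cast : ℤ → ℝ) * (heckeMat L m k * _)
    unfold heckeMat
    rw [← hMmap, Matrix.smul_mul, Matrix.smul_mul, Matrix.mul_smul]
    congr 1
    rw [← mul_assoc, hreal]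
  rw [key, hc₂] at hc₁
  exact hecke_inj L hL _ _ hσ₁p hσ₂p hc₁.symm
end

section
/- Let q = MN with M | N and χ a Dirichlet character mod q, and let b be such that χ(1+kN) = e(bk/M) for all k. Then for every integer j coprime to q and every integer k, χ(j + kN) = χ(j)·e(b·j⁻¹·k/M), where j⁻¹ denotes a multiplicative inverse of j modulo M. -/
open Complex Real

theorem char_on_progression_general (M N q : ℕ) (hM : 0 < M) (hq : q = M * N) (hMN : M ∣ N)
    (χ : DirichletCharacter ℂ q) (b : ℕ)
    (hb : ∀ k : ℤ, χ ((1 + k * N : ℤ) : ZMod q) = Complex.exp (2 * π * Complex.I * b * k / M))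
    (j jinv : ℤ) (hj : IsCoprime j (q : ℤ)) (hjinv : j * jinv ≡ 1 [ZMOD (M : ℤ)]) :
    ∀ k : ℤ, χ ((j + k * N : ℤ) : ZMod q) =
      χ (j : ZMod q) * Complex.exp (2 * π * Complex.I * b * jinv * k / M) := by
  intro k
  obtain ⟨a, c, hac⟩ := hj
  have hMq : (M : ℤ) ∣ (q : ℤ) := by
    exact_mod_cast Int.natCast_dvd_natCast.mpr ⟨N, hq⟩
  have hja : (q : ℤ) ∣ j * a - 1 := ⟨-c, by linarith [hac]⟩
  -- M ∣ a - jinv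
  have hcopjM : IsCoprime j (M : ℤ) := by
    refine IsCoprime.of_isCoprime_of_dvd_right ⟨a, c, hac⟩ hMq
  have hMdvd : (M : ℤ) ∣ j * (a - jinv) := by
    have h1 : (M : ℤ) ∣ j * a - 1 := dvd_trans hMq hja
    have h2 : (M : ℤ) ∣ j * jinv - 1 := Int.ModEq.dvd hjinv.symm
    have := dvd_sub h1 h2
    have heq : j * a - 1 - (j * jinv - 1) = j * (a - jinv) := by ring
    rwa [heq] at this
  have hdvd : (M : ℤ) ∣ (a - jinv) := by
    have := hcopjM.symm.dvd_of_dvd_mul_left (by rwa [mul_comm] at hMdvd)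
    exact this
  obtain ⟨t, ht⟩ := hdvd
  -- key congruence mod q
  have hkey : ((j + k * N : ℤ) : ZMod q) = ((j * (1 + (a * k) * N) : ℤ) : ZMod q) := by
    rw [ZMod.intCast_eq_intCast_iff]
    have : (q : ℤ) ∣ (j * (1 + (a * k) * N) - (j + k * N)) := by
      obtain ⟨d, hd⟩ := hja
      refine ⟨d * k * N, ?_⟩
      have : j * (1 + (a * k) * N) - (j + k * N) = (j * a - 1) * k * N := by ring
      rw [this, hd]; ring
    exact (Int.modEq_iff_dvd.mpr this)
  have hMne : (M : ℂ) ≠ 0 := by exact_mod_cast Nat.cast_ne_zero.mpr hM.ne'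
  calc χ ((j + k * N : ℤ) : ZMod q)
      = χ (((j : ℤ) : ZMod q) * ((1 + (a * k) * N : ℤ) : ZMod q)) := by
        rw [hkey]; push_cast; ring_nf
    _ = χ (j : ZMod q) * χ ((1 + (a * k) * N : ℤ) : ZMod q) := by
        rw [map_mul]
    _ = χ (j : ZMod q) * Complex.exp (2 * π * Complex.I * b * (a * k) / M) := by
        rw [hb (a * k)]; push_cast; ring_nf
    _ = χ (j : ZMod q) * Complex.exp (2 * π * Complex.I * b * jinv * k / M) := by
        congr 1
        have ha : (a : ℂ) = (jinv : ℂ) + (M : ℂ) * (t : ℂ) := by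
          have : a = jinv + M * t := by linarith [ht]
          exact_mod_cast congrArg (Int.cast : ℤ → ℂ) this
        have hsplit : 2 * π * Complex.I * b * (a * k) / M
            = 2 * π * Complex.I * b * jinv * k / M + ((b : ℤ) * k * t : ℤ) * (2 * π * Complex.I) := by
          rw [ha]; push_cast; field_simp
        rw [hsplit, Complex.exp_add, Complex.exp_int_mul_two_pi_mul_I, mul_one]
end
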